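/- Let V ∈ ℝ^{d×d} be a symmetric positive definite matrix and let x_1, …, x_m ∈ ℝ^d. Then det(V + ∑_{i=1}^m x_i x_iᵀ) ≥ det(V) · (1 + ∑_{i=1}^m x_iᵀ V⁻¹ x_i). -/

import Mathlib

open Matrix

private lemma one_add_sum_le_prod_aux {ι : Type*} (s : Finset ι) (f : ι → ℝ)
    (hf : ∀ i ∈ s, 0 ≤ f i) : 1 + ∑ i ∈ s, f i ≤ ∏ i ∈ s, (1 + f i) := by
  induction s using Finset.cons_induction with
  | empty => simp
  | cons a s ha ih =>
    rw [Finset.sum_cons, Finset.prod_cons]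
    have h1 : 0 ≤ f a := hf a (Finset.mem_cons_self a s)
    have h2 : 0 ≤ ∑ i ∈ s, f i := Finset.sum_nonneg fun i hi => hf i (Finset.mem_cons_of_mem hi)
    have h3 := ih fun i hi => hf i (Finset.mem_cons_of_mem hi)
    nlinarith

private lemma det_one_add_ge {d : ℕ} {M : Matrix (Fin d) (Fin d) ℝ} (hM : M.PosSemidef) :
    1 + M.trace ≤ (1 + M).det := by
  have hH := hM.isHermitian
  set U : Matrix (Fin d) (Fin d) ℝ := (hH.eigenvectorUnitary : Matrix (Fin d) (Fin d) ℝ)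
  have hUU : U * star U = 1 := (Matrix.mem_unitaryGroup_iff).mp hH.eigenvectorUnitary.2
  have hUU' : star U * U = 1 := (Matrix.mem_unitaryGroup_iff').mp hH.eigenvectorUnitary.2
  have hspec : M = U * diagonal (RCLike.ofReal ∘ hH.eigenvalues) * star U := hH.spectral_theorem
  have hone : (1 + M) = U * (1 + diagonal (RCLike.ofReal ∘ hH.eigenvalues)) * star U := by
    rw [mul_add, add_mul, mul_one, hUU, ← hspec]
  have hdet : (1 + M).det = ∏ i, (1 + hH.eigenvalues i) := by
    rw [hone, det_mul, det_mul, mul_comm, ← mul_assoc, ← det_mul, hUU', det_one, one_mul]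
    have : (1 : Matrix (Fin d) (Fin d) ℝ) + diagonal (RCLike.ofReal ∘ hH.eigenvalues)
        = diagonal (fun i => 1 + hH.eigenvalues i) := by
      rw [← diagonal_one, diagonal_add]
      rfl
    rw [this, det_diagonal]
  have htr : M.trace = ∑ i, hH.eigenvalues i := by
    conv_lhs => rw [hspec]
    rw [trace_mul_cycle, hUU', one_mul, trace_diagonal]
    rfl
  rw [hdet, htr]
  exact one_add_sum_le_prod_aux Finset.univ _ fun i _ => hM.eigenvalues_nonneg i

/-- For symmetric positive definite `V`,
`det(V + ∑ᵢ xᵢxᵢᵀ) ≥ det(V)·(1 + ∑ᵢ xᵢᵀ V⁻¹ xᵢ)`. -/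
theorem stmt3 {d m : ℕ} (V : Matrix (Fin d) (Fin d) ℝ) (hV : V.PosDef)
    (x : Fin m → Fin d → ℝ) :
    V.det * (1 + ∑ i, x i ⬝ᵥ V⁻¹ *ᵥ x i)
      ≤ (V + ∑ i, vecMulVec (x i) (x i)).det := by
  set C : Matrix (Fin d) (Fin d) ℝ := ∑ i, vecMulVec (x i) (x i) with hCdef
  have hv : ∀ i : Fin m, (vecMulVec (x i) (x i)).PosSemidef := by
    intro i
    refine .of_dotProduct_mulVec_nonneg ?_ fun y => ?_
    · ext a b
      simp [vecMulVec_apply, conjTranspose_apply, mul_comm]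
    · have h : star y ⬝ᵥ vecMulVec (x i) (x i) *ᵥ y = (x i ⬝ᵥ y) * (x i ⬝ᵥ y) := by
        simp only [star_trivial, dotProduct, mulVec, vecMulVec_apply, Finset.mul_sum,
          Finset.sum_mul]
        refine Finset.sum_congr rfl fun a _ => Finset.sum_congr rfl fun b _ => by ring
      rw [h]
      exact mul_self_nonneg _
  have hC : C.PosSemidef := by
    rw [hCdef]
    exact Finset.sum_induction _ _ (fun A B hA hB => hA.add hB) PosSemidef.zero
      fun i _ => hv i
  set S : Matrix (Fin d) (Fin d) ℝ := (open MatrixOrder in CFC.sqrt V) with hSdef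
  have hSS : S * S = V := by
    open MatrixOrder in exact CFC.sqrt_mul_sqrt_self V hV.posSemidef.nonneg
  have hSherm : S.IsHermitian := by
    open MatrixOrder in exact (nonneg_iff_posSemidef.mp (CFC.sqrt_nonneg V)).isHermitian
  have hdetS : S.det * S.det = V.det := by rw [← det_mul, hSS]
  have hdetSne : S.det ≠ 0 := by
    intro h
    rw [h, mul_zero] at hdetS
    exact (ne_of_gt hV.det_pos) hdetS.symm
  have hSunit : IsUnit S.det := isUnit_iff_ne_zero.mpr hdetSne
  have hSinv : S * S⁻¹ = 1 := mul_nonsing_inv S hSunit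
  have hSinv' : S⁻¹ * S = 1 := nonsing_inv_mul S hSunit
  have hSinvherm : (S⁻¹)ᴴ = S⁻¹ := by
    rw [conjTranspose_nonsing_inv, hSherm.eq]
  have hVinv : V⁻¹ = S⁻¹ * S⁻¹ := by rw [← hSS, Matrix.mul_inv_rev]
  set M : Matrix (Fin d) (Fin d) ℝ := S⁻¹ * C * S⁻¹ with hMdef
  have hM : M.PosSemidef := by
    have := hC.conjTranspose_mul_mul_same S⁻¹
    rwa [hSinvherm] at this
  have hkey : V + C = S * (1 + M) * S := by
    rw [hMdef, mul_add, add_mul, mul_one, hSS]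
    congr 1
    rw [← mul_assoc, ← mul_assoc, hSinv, one_mul, mul_assoc, hSinv', mul_one]
  have hdet : (V + C).det = V.det * (1 + M).det := by
    have h1 : (V + C).det = S.det * (1 + M).det * S.det := by rw [hkey, det_mul, det_mul]
    rw [h1, ← hdetS]
    ring
  have htr : M.trace = ∑ i, x i ⬝ᵥ V⁻¹ *ᵥ x i := by
    rw [hMdef, trace_mul_cycle, ← hVinv, hCdef, Finset.mul_sum, trace_sum]
    refine Finset.sum_congr rfl fun i _ => ?_
    simp only [trace, diag, mul_apply, vecMulVec_apply, dotProduct, mulVec, Finset.mul_sum]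
    exact Finset.sum_congr rfl fun a _ => Finset.sum_congr rfl fun b _ => by ring
  calc V.det * (1 + ∑ i, x i ⬝ᵥ V⁻¹ *ᵥ x i) = V.det * (1 + M.trace) := by rw [htr]
    _ ≤ V.det * (1 + M).det :=
        mul_le_mul_of_nonneg_left (det_one_add_ge hM) (le_of_lt hV.det_pos)
    _ = (V + C).det := hdet.symm
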